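/- Let $\gamma_c>0$ and let $P:\mathbb{R}\to\mathbb{R}$ be continuous with $P(0)=0$ and continuously differentiable on $\mathbb{R}\setminus\{0\}$. Then for every $y\in\mathbb{R}$ the function $n\mapsto yn-P(n)-\frac{\gamma_c}{2}n^2$ has a unique maximizer over $\mathbb{R}$ if and only if $n\mapsto \frac{\gamma_c}{2}n^2+P(n)$ is strictly convex on $\mathbb{R}$ and $\lim_{n\to\pm\infty}(\gamma_c n+P'(n))=\pm\infty$. -/

import Mathlib

open Set Filter

/-- If for every slope `y` the function `f` has a unique global supporting point with slope
`y`, and `f` is continuous, then `f` is strictly convex. -/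
lemma aux_forward (f : ℝ → ℝ) (hf : Continuous f)
    (H : ∀ y : ℝ, ∃! n : ℝ, ∀ m : ℝ, f n + y * (m - n) ≤ f m) :
    StrictConvexOn ℝ univ f := by
  classical
  choose N hN hNu using H
  -- strict support
  have hNs : ∀ y m, m ≠ N y → f (N y) + y * (m - N y) < f m := by
    intro y m hm
    rcases (hN y m).lt_or_eq with h | h
    · exact h
    · exfalso
      apply hm
      apply hNu y m
      intro m'
      have h1 := hN y m'
      have hid : y * (m - N y) + y * (m' - m) = y * (m' - N y) := by ring
      linarith
  have mono : Monotone N := by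
    intro y1 y2 h12
    rcases h12.eq_or_lt with rfl | hy
    · exact le_rfl
    by_contra hle
    push_neg at hle
    have h1 := hN y1 (N y2)
    have h2 := hN y2 (N y1)
    nlinarith [mul_pos (sub_pos.2 hy) (sub_pos.2 hle)]
  -- N is unbounded above
  have habove : ∀ c : ℝ, ∃ y, c < N y := by
    intro c
    by_contra h
    push_neg at h
    obtain ⟨C, hC⟩ := (isCompact_Icc : IsCompact (Icc (N 0) c)).exists_bound_of_continuousOn
      hf.continuousOn
    set y := max 0 (C + f (c + 1) + 1) with hy
    have hy0 : (0:ℝ) ≤ y := le_max_left _ _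
    have hmem : N y ∈ Icc (N 0) c := ⟨mono hy0, h y⟩
    have hb := hN y (c + 1)
    have hfN : -C ≤ f (N y) := by
      have := hC _ hmem
      rw [Real.norm_eq_abs] at this
      linarith [abs_le.1 this |>.1]
    have h1 : (1:ℝ) ≤ c + 1 - N y := by linarith [h y]
    have h2 : y ≤ y * (c + 1 - N y) := le_mul_of_one_le_right hy0 h1
    have h3 : C + f (c + 1) + 1 ≤ y := le_max_right _ _
    linarith
  -- N is unbounded below
  have hbelow : ∀ c : ℝ, ∃ y, N y < c := by
    intro c
    by_contra h
    push_neg at h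
    obtain ⟨C, hC⟩ := (isCompact_Icc : IsCompact (Icc c (N 0))).exists_bound_of_continuousOn
      hf.continuousOn
    set y := min 0 (-(C + f (c - 1)) - 1) with hy
    have hy0 : y ≤ (0:ℝ) := min_le_left _ _
    have hmem : N y ∈ Icc c (N 0) := ⟨h y, mono hy0⟩
    have hb := hN y (c - 1)
    have hfN : -C ≤ f (N y) := by
      have := hC _ hmem
      rw [Real.norm_eq_abs] at this
      linarith [abs_le.1 this |>.1]
    have h1 : N y - (c - 1) ≥ 1 := by linarith [h y]
    have h2 : -y ≤ y * (c - 1 - N y) := by nlinarith [mul_nonneg (neg_nonneg.2 hy0) (by linarith : (0:ℝ) ≤ N y - (c - 1) - 1)]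
    have h3 : y ≤ -(C + f (c - 1)) - 1 := min_le_right _ _
    linarith
  -- N is surjective
  have surj : ∀ c : ℝ, ∃ y, N y = c := by
    intro c
    by_contra hc
    push_neg at hc
    set A := {y : ℝ | N y < c} with hA
    obtain ⟨ya, hya⟩ := hbelow c
    obtain ⟨yb, hyb⟩ := habove c
    have hAne : A.Nonempty := ⟨ya, hya⟩
    have hAbdd : BddAbove A := by
      refine ⟨yb, fun y hy => ?_⟩
      by_contra hle
      push_neg at hle
      exact absurd (lt_of_lt_of_le hyb (mono hle.le)) (not_lt.2 hy.le)
    set y0 := sSup A with hy0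
    have hTm : Tendsto N (nhdsWithin y0 (Iio y0)) (nhds (sSup (N '' Iio y0))) :=
      mono.tendsto_nhdsLT y0
    have hTp : Tendsto N (nhdsWithin y0 (Ioi y0)) (nhds (sInf (N '' Ioi y0))) :=
      mono.tendsto_nhdsGT y0
    set Lm := sSup (N '' Iio y0) with hLmdef
    set Lp := sInf (N '' Ioi y0) with hLpdef
    have hsupm : ∀ m, f Lm + y0 * (m - Lm) ≤ f m := by
      intro m
      have hid : Tendsto (fun y : ℝ => y) (nhdsWithin y0 (Iio y0)) (nhds y0) :=
        tendsto_id.mono_left nhdsWithin_le_nhds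
      have hg : Tendsto (fun y => f (N y) + y * (m - N y)) (nhdsWithin y0 (Iio y0))
          (nhds (f Lm + y0 * (m - Lm))) :=
        ((hf.tendsto Lm).comp hTm).add (hid.mul (tendsto_const_nhds.sub hTm))
      exact le_of_tendsto hg (Eventually.of_forall fun y => hN y m)
    have hsupp : ∀ m, f Lp + y0 * (m - Lp) ≤ f m := by
      intro m
      have hid : Tendsto (fun y : ℝ => y) (nhdsWithin y0 (Ioi y0)) (nhds y0) :=
        tendsto_id.mono_left nhdsWithin_le_nhds
      have hg : Tendsto (fun y => f (N y) + y * (m - N y)) (nhdsWithin y0 (Ioi y0))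
          (nhds (f Lp + y0 * (m - Lp))) :=
        ((hf.tendsto Lp).comp hTp).add (hid.mul (tendsto_const_nhds.sub hTp))
      exact le_of_tendsto hg (Eventually.of_forall fun y => hN y m)
    have hEm : Lm = N y0 := hNu y0 Lm hsupm
    have hEp : Lp = N y0 := hNu y0 Lp hsupp
    have hLm : Lm ≤ c := by
      apply csSup_le ⟨N (y0 - 1), mem_image_of_mem _ (by simp : y0 - 1 ∈ Iio y0)⟩
      rintro x ⟨y, hy, rfl⟩
      obtain ⟨a, haA, hya'⟩ := exists_lt_of_lt_csSup hAne hy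
      exact le_of_lt (lt_of_le_of_lt (mono hya'.le) haA)
    have hLp : c ≤ Lp := by
      apply le_csInf ⟨N (y0 + 1), mem_image_of_mem _ (by simp : y0 + 1 ∈ Ioi y0)⟩
      rintro x ⟨y, hy, rfl⟩
      by_contra hlt
      push_neg at hlt
      exact absurd (le_csSup hAbdd (by exact hlt : y ∈ A)) (not_le.2 hy)
    exact hc y0 (le_antisymm (hEm ▸ hLm) (hEp ▸ hLp))
  -- strict convexity
  refine ⟨convex_univ, ?_⟩
  intro x _ z _ hxz a b ha hb hab
  obtain ⟨y, hy⟩ := surj (a * x + b * z)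
  have hxc : x ≠ a * x + b * z := by
    intro h
    apply hxz
    have hbz : b * (z - x) = 0 := by linear_combination -h - x * hab
    rcases mul_eq_zero.1 hbz with h' | h'
    · exact absurd h' (ne_of_gt hb)
    · linarith [sub_eq_zero.1 h']
  have hzc : z ≠ a * x + b * z := by
    intro h
    apply hxz
    have haz : a * (z - x) = 0 := by linear_combination h + z * hab
    rcases mul_eq_zero.1 haz with h' | h'
    · exact absurd h' (ne_of_gt ha)
    · linarith [sub_eq_zero.1 h']
  have h1 : f (a * x + b * z) + y * (x - (a * x + b * z)) < f x := by
    have := hNs y x (hy ▸ hxc)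
    rwa [hy] at this
  have h2 : f (a * x + b * z) + y * (z - (a * x + b * z)) < f z := by
    have := hNs y z (hy ▸ hzc)
    rwa [hy] at this
  have h1' := mul_lt_mul_of_pos_left h1 ha
  have h2' := mul_lt_mul_of_pos_left h2 hb
  have e1 : a * (f (a * x + b * z) + y * (x - (a * x + b * z)))
      + b * (f (a * x + b * z) + y * (z - (a * x + b * z))) = f (a * x + b * z) := by
    linear_combination (f (a * x + b * z) - y * (a * x + b * z)) * hab
  simp only [smul_eq_mul]
  linarith

theorem monopolist_admissibility_characterization
    (γc : ℝ) (hγc : 0 < γc)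
    (P : ℝ → ℝ) (hPcont : Continuous P) (hP0 : P 0 = 0)
    (hPsmooth : ContDiffOn ℝ 1 P {(0 : ℝ)}ᶜ) :
    (∀ y : ℝ, ∃! n : ℝ, ∀ m : ℝ,
        y * m - P m - γc / 2 * m ^ 2 ≤ y * n - P n - γc / 2 * n ^ 2) ↔
      (StrictConvexOn ℝ univ (fun n => γc / 2 * n ^ 2 + P n) ∧
        Tendsto (fun n => γc * n + deriv P n) atTop atTop ∧
        Tendsto (fun n => γc * n + deriv P n) atBot atBot) := by
  set f : ℝ → ℝ := fun n => γc / 2 * n ^ 2 + P n with hfdef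
  have hfc : Continuous f := ((continuous_const.mul (continuous_pow 2)).add hPcont)
  have hfd : ∀ n : ℝ, n ≠ 0 → HasDerivAt f (γc * n + deriv P n) n := by
    intro n hn
    have h1 : DifferentiableAt ℝ P n :=
      (hPsmooth.contDiffAt (isOpen_compl_singleton.mem_nhds (by simpa using hn))).differentiableAt
        one_ne_zero
    have h2 : HasDerivAt P (deriv P n) n := h1.hasDerivAt
    have h3 : HasDerivAt (fun x : ℝ => γc / 2 * x ^ 2) (γc / 2 * (2 * n ^ 1)) n :=
      (hasDerivAt_pow 2 n).const_mul (γc / 2)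
    have h4 := h3.add h2
    have he : γc / 2 * (2 * n ^ 1) + deriv P n = γc * n + deriv P n := by ring
    rw [he] at h4
    exact h4
  clear_value f
  constructor
  · intro H
    have H' : ∀ y : ℝ, ∃! n : ℝ, ∀ m : ℝ, f n + y * (m - n) ≤ f m := by
      intro y
      obtain ⟨n, hn, hu⟩ := H y
      refine ⟨n, fun m => by simp only [hfdef]; nlinarith [hn m], fun n' hn' => hu n' (fun m => by have := hn' m; simp only [hfdef] at this; nlinarith [this])⟩
    have hconv : StrictConvexOn ℝ univ f := aux_forward f hfc H'
    refine ⟨hconv, ?_, ?_⟩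
    · rw [tendsto_atTop_atTop]
      intro b
      obtain ⟨n0, hn0, -⟩ := H' b
      refine ⟨max n0 0 + 1, fun n hn => ?_⟩
      have hn0n : n0 < n := lt_of_le_of_lt (le_max_left _ _) (by linarith [hn])
      have h0n : (0:ℝ) < n := lt_of_le_of_lt (le_max_right _ _) (by linarith [hn])
      have hd := hfd n (ne_of_gt h0n)
      have hslope : ∀ n', n < n' → b ≤ slope f n n' := by
        intro n' hn'
        have hadj := hconv.convexOn.slope_mono_adjacent (mem_univ n0) (mem_univ n') hn0n hn'
        have hsup : b ≤ (f n - f n0) / (n - n0) := by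
          rw [le_div_iff₀ (by linarith : (0:ℝ) < n - n0)]
          have := hn0 n
          nlinarith
        rw [slope_def_field]
        exact le_trans hsup hadj
      have htend := hasDerivAt_iff_tendsto_slope.1 hd
      have hmono : nhdsWithin n (Ioi n) ≤ nhdsWithin n ({n}ᶜ) :=
        nhdsWithin_mono n (fun x hx => by simpa using (ne_of_gt hx))
      refine ge_of_tendsto (htend.mono_left hmono) ?_
      exact eventually_mem_nhdsWithin.mono fun n' hn' => hslope n' hn'
    · rw [tendsto_atBot_atBot]
      intro b
      obtain ⟨n0, hn0, -⟩ := H' b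
      refine ⟨min n0 0 - 1, fun n hn => ?_⟩
      have hn0n : n < n0 := lt_of_lt_of_le (by linarith [hn] : n < min n0 0) (min_le_left _ _)
      have h0n : n < 0 := lt_of_lt_of_le (by linarith [hn] : n < min n0 0) (min_le_right _ _)
      have hd := hfd n (ne_of_lt h0n)
      have hslope : ∀ n', n' < n → slope f n n' ≤ b := by
        intro n' hn'
        have hadj := hconv.convexOn.slope_mono_adjacent (mem_univ n') (mem_univ n0) hn' hn0n
        have hsup : (f n0 - f n) / (n0 - n) ≤ b := by
          rw [div_le_iff₀ (by linarith : (0:ℝ) < n0 - n)]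
          have := hn0 n
          nlinarith
        rw [slope_def_field]
        have heq : (f n' - f n) / (n' - n) = (f n - f n') / (n - n') := by
          rw [div_eq_div_iff (by linarith : n' - n ≠ 0) (by linarith : n - n' ≠ 0)]
          ring
        rw [heq]
        exact le_trans hadj hsup
      have htend := hasDerivAt_iff_tendsto_slope.1 hd
      have hmono : nhdsWithin n (Iio n) ≤ nhdsWithin n ({n}ᶜ) :=
        nhdsWithin_mono n (fun x hx => by simpa using (ne_of_lt hx))
      refine le_of_tendsto (htend.mono_left hmono) ?_
      exact eventually_mem_nhdsWithin.mono fun n' hn' => hslope n' hn'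
  · rintro ⟨hconv, htop, hbot⟩ y
    -- coercivity at +∞
    obtain ⟨a', ha'⟩ := eventually_atTop.1 (htop.eventually_ge_atTop (y + 1))
    set a₀ : ℝ := max a' 1 with ha₀def
    have ha₀pos : (0:ℝ) < a₀ := lt_of_lt_of_le one_pos (le_max_right _ _)
    have hclaimtop : ∀ n, a₀ ≤ n → y * n - f n ≤ (y * a₀ - f a₀) + a₀ - n := by
      intro n hn
      rcases hn.eq_or_lt with rfl | hlt
      · linarith
      · obtain ⟨k, hk, hkeq⟩ := exists_hasDerivAt_eq_slope f (fun x => γc * x + deriv P x) hlt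
          hfc.continuousOn (fun x hx => hfd x (ne_of_gt (lt_trans ha₀pos hx.1)))
        have hk1 : y + 1 ≤ γc * k + deriv P k :=
          ha' k (le_trans (le_max_left _ _) (le_of_lt hk.1))
        rw [hkeq] at hk1
        have h3 : (y + 1) * (n - a₀) ≤ f n - f a₀ := by
          rw [← le_div_iff₀ (by linarith : (0:ℝ) < n - a₀)] at *
          linarith
        nlinarith
    -- coercivity at -∞
    obtain ⟨a'', ha''⟩ := eventually_atBot.1 (hbot.eventually_le_atBot (y - 1))
    set a₁ : ℝ := min a'' (-1) with ha₁def
    have ha₁neg : a₁ < 0 := lt_of_le_of_lt (min_le_right _ _) (by norm_num)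
    have hclaimbot : ∀ n, n ≤ a₁ → y * n - f n ≤ (y * a₁ - f a₁) - a₁ + n := by
      intro n hn
      rcases hn.eq_or_lt with rfl | hlt
      · linarith
      · obtain ⟨k, hk, hkeq⟩ := exists_hasDerivAt_eq_slope f (fun x => γc * x + deriv P x) hlt
          hfc.continuousOn (fun x hx => hfd x (ne_of_lt (lt_trans hx.2 ha₁neg)))
        have hk1 : γc * k + deriv P k ≤ y - 1 :=
          ha'' k (le_trans (le_of_lt hk.2) (min_le_left _ _))
        rw [hkeq] at hk1
        have h3 : f a₁ - f n ≤ (y - 1) * (a₁ - n) := by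
          rw [div_le_iff₀ (by linarith : (0:ℝ) < a₁ - n)] at hk1
          linarith
        nlinarith
    -- existence of maximizer
    have hGcont : Continuous (fun m : ℝ => y * m - f m) :=
      ((continuous_const.mul continuous_id).sub hfc)
    have hcoer : Tendsto (fun m : ℝ => y * m - f m) (cocompact ℝ) atBot := by
      rw [cocompact_eq_atBot_atTop, tendsto_sup]
      constructor
      · refine tendsto_atBot_mono' atBot (eventually_atBot.2 ⟨a₁, hclaimbot⟩) ?_
        exact tendsto_atBot_add_const_left _ _ tendsto_id
      · refine tendsto_atBot_mono' atTop (eventually_atTop.2 ⟨a₀, hclaimtop⟩) ?_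
        exact tendsto_atBot_add_const_left _ _ tendsto_neg_atTop_atBot
    obtain ⟨n, hnmax⟩ := hGcont.exists_forall_ge hcoer
    refine ⟨n, fun m => by have := hnmax m; simp only [hfdef] at this; nlinarith [this], ?_⟩
    intro n' hn'
    have hn'max : ∀ m, y * m - f m ≤ y * n' - f n' := fun m => by have := hn' m; simp only [hfdef]; nlinarith [this]
    by_contra hne
    have hval : y * n' - f n' = y * n - f n := le_antisymm (hnmax n') (hn'max n)
    have hmid := hconv.2 (mem_univ n') (mem_univ n) hne (by norm_num : (0:ℝ) < 1/2)
      (by norm_num : (0:ℝ) < 1/2) (by norm_num)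
    simp only [smul_eq_mul] at hmid
    have hle := hnmax (1/2 * n' + 1/2 * n)
    have hfmid : f (1/2 * n' + 1/2 * n) < 1/2 * f n' + 1/2 * f n := hmid
    nlinarith
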